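/- arXiv:1704.06180 — 2 statements merged into one kernel-verified Lean document; each statement's English description precedes it below -/
import Mathlib

section
/- Let k ≥ 2 and c > 0. Let G_1, …, G_{k−1} be independent real-valued random variables, each with a law absolutely continuous with respect to Lebesgue measure with density bounded above by c. Let λ_1, …, λ_k and ν_1, …, ν_k be integers and suppose L := max_{1≤i≤k−1} |λ_i − ν_i| > 0. Then P( λ_k + Σ_{i=1}^{k−1} ⌊G_i λ_i⌋ = ν_k + Σ_{i=1}^{k−1} ⌊G_i ν_i⌋ ) ≤ 2·k·c / L. -/
open MeasureTheory ProbabilityTheory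

/-- If `⌊x*a⌋ - ⌊x*b⌋ = m` then `x` lies in a ball of radius `1/|a-b|`. -/
lemma floor_diff_subset_ball (a b : ℤ) (hab : (a : ℝ) ≠ (b : ℝ)) (m : ℤ) :
    {x : ℝ | ⌊x * (a : ℝ)⌋ - ⌊x * (b : ℝ)⌋ = m} ⊆
      Metric.ball ((m : ℝ) / ((a : ℝ) - b)) (1 / |(a : ℝ) - b|) := by
  intro x hx
  simp only [Set.mem_setOf_eq] at hx
  have h1 : (⌊x * (a : ℝ)⌋ : ℝ) ≤ x * a := Int.floor_le _
  have h2 : x * (a : ℝ) < ⌊x * (a : ℝ)⌋ + 1 := Int.lt_floor_add_one _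
  have h3 : (⌊x * (b : ℝ)⌋ : ℝ) ≤ x * b := Int.floor_le _
  have h4 : x * (b : ℝ) < ⌊x * (b : ℝ)⌋ + 1 := Int.lt_floor_add_one _
  have hm : ((m : ℤ) : ℝ) = (⌊x * (a : ℝ)⌋ : ℝ) - (⌊x * (b : ℝ)⌋ : ℝ) := by
    rw [← Int.cast_sub, hx]
  have hd : (a : ℝ) - b ≠ 0 := sub_ne_zero.mpr hab
  have habs : |x * ((a : ℝ) - b) - m| < 1 := by
    rw [abs_lt]
    constructor <;> nlinarith
  have key : |x - (m : ℝ) / ((a : ℝ) - b)| < 1 / |(a : ℝ) - b| := by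
    have hpos : 0 < |(a : ℝ) - b| := abs_pos.mpr hd
    rw [lt_div_iff₀ hpos, ← abs_mul, sub_mul, div_mul_cancel₀ _ hd]
    exact habs
  simpa [Metric.mem_ball, Real.dist_eq] using key

/-- Probability of image alignment at user `k`: if the integer inputs of the two
realizations differ by `L > 0` in some coordinate, the probability that the two floor-sum
outputs coincide is at most `2kc/L`. -/
theorem prob_image_alignment {Ω : Type*} [MeasurableSpace Ω]
    (μ : Measure Ω) [IsProbabilityMeasure μ]
    (k : ℕ) (hk : 2 ≤ k) (c : ℝ) (hc : 0 < c)
    (G : Fin (k - 1) → Ω → ℝ) (hG : ∀ i, Measurable (G i))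
    (hindep : iIndepFun G μ)
    (hdens : ∀ i, ∀ s : Set ℝ, MeasurableSet s →
      (μ.map (G i)) s ≤ ENNReal.ofReal c * volume s)
    (lam nu : Fin (k - 1) → ℤ) (lamk nuk : ℤ)
    (L : ℤ)
    (hLdef : L = Finset.univ.sup' ⟨⟨0, by omega⟩, Finset.mem_univ _⟩
      fun i => |lam i - nu i|)
    (hL : 0 < L) :
    μ {ω | lamk + ∑ i, ⌊G i ω * (lam i : ℝ)⌋ = nuk + ∑ i, ⌊G i ω * (nu i : ℝ)⌋}
      ≤ ENNReal.ofReal (2 * (k : ℝ) * c / (L : ℝ)) := by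
  -- pick the coordinate attaining the sup
  obtain ⟨i₀, -, hsup⟩ := Finset.exists_mem_eq_sup'
    (⟨⟨0, by omega⟩, Finset.mem_univ _⟩ : (Finset.univ : Finset (Fin (k - 1))).Nonempty)
    (fun i => |lam i - nu i|)
  have hLi : L = |lam i₀ - nu i₀| := hLdef.trans hsup
  have hd0 : lam i₀ - nu i₀ ≠ 0 := by
    intro h; rw [hLi, h] at hL; simp at hL
  have hdR : (lam i₀ : ℝ) ≠ (nu i₀ : ℝ) := by
    intro h
    exact hd0 (by exact_mod_cast sub_eq_zero.mpr h)
  have hLR : |(lam i₀ : ℝ) - (nu i₀ : ℝ)| = (L : ℝ) := by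
    rw [hLi]; push_cast [abs_sub_comm]; rw [abs_sub_comm]
  have hLRpos : (0 : ℝ) < (L : ℝ) := by exact_mod_cast hL
  -- the aligned-image function of coordinate i₀ and the rest-sum
  set f : ℝ → ℤ := fun x => ⌊x * (lam i₀ : ℝ)⌋ - ⌊x * (nu i₀ : ℝ)⌋ with hf
  set M : Ω → ℤ := fun ω => nuk - lamk +
    ∑ j ∈ ({i₀}ᶜ : Finset (Fin (k - 1))), (⌊G j ω * (nu j : ℝ)⌋ - ⌊G j ω * (lam j : ℝ)⌋) with hM
  have hfmeas : Measurable f := ((measurable_id.mul_const _).floor).sub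
    ((measurable_id.mul_const _).floor)
  -- rewrite the event
  have hevent : {ω | lamk + ∑ i, ⌊G i ω * (lam i : ℝ)⌋ = nuk + ∑ i, ⌊G i ω * (nu i : ℝ)⌋}
      = {ω | f (G i₀ ω) = M ω} := by
    ext ω
    simp only [Set.mem_setOf_eq, hf, hM]
    rw [← Finset.sum_compl_add_sum ({i₀} : Finset (Fin (k - 1)))
      (fun i => ⌊G i ω * (lam i : ℝ)⌋),
      ← Finset.sum_compl_add_sum ({i₀} : Finset (Fin (k - 1)))
      (fun i => ⌊G i ω * (nu i : ℝ)⌋), Finset.sum_singleton, Finset.sum_singleton,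
      Finset.sum_sub_distrib]
    omega
  -- independence of f ∘ G i₀ and M
  have hIF : IndepFun (fun a (i : ({i₀} : Finset (Fin (k - 1)))) => G i a)
      (fun a (i : (({i₀}ᶜ : Finset (Fin (k - 1))))) => G i a) μ :=
    hindep.indepFun_finset _ _ disjoint_compl_right hG
  set φ : (({i₀} : Finset (Fin (k - 1))) → ℝ) → ℤ :=
    fun v => f (v ⟨i₀, Finset.mem_singleton_self i₀⟩) with hφ
  set ψ : ((({i₀}ᶜ : Finset (Fin (k - 1)))) → ℝ) → ℤ :=
    fun v => nuk - lamk + ∑ j : (({i₀}ᶜ : Finset (Fin (k - 1)))),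
      (⌊v j * (nu (j : Fin (k - 1)) : ℝ)⌋ - ⌊v j * (lam (j : Fin (k - 1)) : ℝ)⌋) with hψ
  have hφmeas : Measurable φ := hfmeas.comp (measurable_pi_apply _)
  have hψmeas : Measurable ψ := by
    refine Measurable.const_add (Finset.measurable_sum Finset.univ fun j _ => ?_) _
    exact (((measurable_pi_apply j).mul_const _).floor).sub
      (((measurable_pi_apply j).mul_const _).floor)
  have hI : IndepFun (fun ω => f (G i₀ ω)) M μ := by
    have := hIF.comp hφmeas hψmeas
    have heq : (ψ ∘ fun a (i : (({i₀}ᶜ : Finset (Fin (k - 1))))) => G i a) = M := by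
      funext ω
      simp only [Function.comp_apply, hψ, hM]
      congr 1
      exact Finset.sum_coe_sort ({i₀}ᶜ : Finset (Fin (k - 1)))
        (fun j => ⌊G j ω * (nu j : ℝ)⌋ - ⌊G j ω * (lam j : ℝ)⌋)
    rw [heq] at this
    exact this
  have hMmeas : Measurable M := by
    refine Measurable.const_add (Finset.measurable_sum _ fun j _ => ?_) _
    exact (((hG j).mul_const _).floor).sub (((hG j).mul_const _).floor)
  -- union decomposition
  have hsub : {ω | f (G i₀ ω) = M ω} ⊆
      ⋃ m : ℤ, ((fun ω => f (G i₀ ω)) ⁻¹' {m} ∩ M ⁻¹' {m}) := by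
    intro ω hω
    exact Set.mem_iUnion.mpr ⟨M ω, hω, rfl⟩
  -- per-value bound
  have hbound : ∀ m : ℤ, μ ((fun ω => f (G i₀ ω)) ⁻¹' {m}) ≤ ENNReal.ofReal (2 * c / L) := by
    intro m
    have hpre : (fun ω => f (G i₀ ω)) ⁻¹' {m} = G i₀ ⁻¹' (f ⁻¹' {m}) := rfl
    have hms : MeasurableSet (f ⁻¹' {m}) := hfmeas (measurableSet_singleton m)
    rw [hpre, ← Measure.map_apply (hG i₀) hms]
    calc (μ.map (G i₀)) (f ⁻¹' {m}) ≤ ENNReal.ofReal c * volume (f ⁻¹' {m}) :=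
          hdens i₀ _ hms
      _ ≤ ENNReal.ofReal c * volume (Metric.ball ((m : ℝ) / ((lam i₀ : ℝ) - nu i₀))
            (1 / |(lam i₀ : ℝ) - nu i₀|)) := by
          gcongr
          exact floor_diff_subset_ball _ _ hdR m
      _ = ENNReal.ofReal c * ENNReal.ofReal (2 * (1 / (L : ℝ))) := by
          rw [Real.volume_ball, hLR]
      _ = ENNReal.ofReal (2 * c / L) := by
          rw [← ENNReal.ofReal_mul hc.le]
          congr 1
          field_simp
  -- sum up
  have hABm : ∀ m : ℤ, μ ((fun ω => f (G i₀ ω)) ⁻¹' {m} ∩ M ⁻¹' {m})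
      = μ ((fun ω => f (G i₀ ω)) ⁻¹' {m}) * μ (M ⁻¹' {m}) := fun m =>
    hI.measure_inter_preimage_eq_mul _ _ (measurableSet_singleton m) (measurableSet_singleton m)
  have hBsum : ∑' m : ℤ, μ (M ⁻¹' {m}) ≤ 1 := by
    rw [← measure_iUnion (fun m m' hmm' => Set.disjoint_left.mpr
        (fun ω h1 h2 => hmm' (h1.symm.trans h2))) (fun m => hMmeas (measurableSet_singleton m))]
    exact prob_le_one
  calc μ {ω | lamk + ∑ i, ⌊G i ω * (lam i : ℝ)⌋ = nuk + ∑ i, ⌊G i ω * (nu i : ℝ)⌋}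
      ≤ μ (⋃ m : ℤ, ((fun ω => f (G i₀ ω)) ⁻¹' {m} ∩ M ⁻¹' {m})) := by
        rw [hevent]; exact measure_mono hsub
    _ ≤ ∑' m : ℤ, μ ((fun ω => f (G i₀ ω)) ⁻¹' {m} ∩ M ⁻¹' {m}) := measure_iUnion_le _
    _ ≤ ∑' m : ℤ, ENNReal.ofReal (2 * c / L) * μ (M ⁻¹' {m}) := by
        apply ENNReal.tsum_le_tsum
        intro m
        rw [hABm m]
        exact mul_le_mul_left (hbound m) _
    _ = ENNReal.ofReal (2 * c / L) * ∑' m : ℤ, μ (M ⁻¹' {m}) := ENNReal.tsum_mul_left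
    _ ≤ ENNReal.ofReal (2 * c / L) * 1 := mul_le_mul_right hBsum _
    _ ≤ ENNReal.ofReal (2 * (k : ℝ) * c / (L : ℝ)) := by
        rw [mul_one]
        apply ENNReal.ofReal_le_ofReal
        have hk1 : (1 : ℝ) ≤ (k : ℝ) := by exact_mod_cast Nat.one_le_of_lt hk
        rw [div_le_div_iff₀ hLRpos hLRpos]
        nlinarith [mul_le_mul_of_nonneg_right
          (mul_le_mul_of_nonneg_left hk1 (by linarith : (0:ℝ) ≤ 2 * c)) hLRpos.le]
end

section
/- Let k ≥ 2, K ≥ k, Δ ≥ 1 and c > 0. Let g'_1, …, g'_{k−1} be real numbers with |g'_i| ≤ Δ, let λ_1, …, λ_k and ν_1, …, ν_k be integers, and set λ = Σ_{i=1}^{k−1} ⌊g'_i λ_i⌋ and ν = Σ_{i=1}^{k−1} ⌊g'_i ν_i⌋. Let G_1, …, G_{k−1} be independent real-valued random variables, each with density bounded above by c. If |λ − ν| > K, then P( λ_k + Σ_{i=1}^{k−1} ⌊G_i λ_i⌋ = ν_k + Σ_{i=1}^{k−1} ⌊G_i ν_i⌋ ) ≤ 2·K²·Δ·c / (|λ −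 ν| − K). -/
open MeasureTheory ProbabilityTheory

/-- Per-channel-use probability of image alignment, in terms of the received-signal
realizations `λ, ν` of the previous user: if `|λ − ν| > K`, the probability that the images
align at user `k` is at most `2K²Δc/(|λ − ν| − K)`. -/
theorem prob_image_alignment_received {Ω : Type*} [MeasurableSpace Ω]
    (μ : Measure Ω) [IsProbabilityMeasure μ]
    (k K : ℕ) (hk : 2 ≤ k) (hkK : k ≤ K)
    (Δ : ℝ) (hΔ : 1 ≤ Δ) (c : ℝ) (hc : 0 < c)
    (g' : Fin (k - 1) → ℝ) (hg' : ∀ i, |g' i| ≤ Δ)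
    (lam nu : Fin (k - 1) → ℤ) (lamk nuk : ℤ)
    (G : Fin (k - 1) → Ω → ℝ) (hG : ∀ i, Measurable (G i))
    (hindep : iIndepFun G μ)
    (hdens : ∀ i, ∀ s : Set ℝ, MeasurableSet s →
      (μ.map (G i)) s ≤ ENNReal.ofReal c * volume s)
    (h : (K : ℤ) < |(∑ i, ⌊g' i * (lam i : ℝ)⌋) - (∑ i, ⌊g' i * (nu i : ℝ)⌋)|) :
    μ {ω | lamk + ∑ i, ⌊G i ω * (lam i : ℝ)⌋ = nuk + ∑ i, ⌊G i ω * (nu i : ℝ)⌋}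
      ≤ ENNReal.ofReal (2 * (K : ℝ) ^ 2 * Δ * c /
          (((|(∑ i, ⌊g' i * (lam i : ℝ)⌋) - (∑ i, ⌊g' i * (nu i : ℝ)⌋)| : ℤ) : ℝ)
            - (K : ℝ))) := by
  classical
  set Dz : ℤ := |(∑ i, ⌊g' i * (lam i : ℝ)⌋) - (∑ i, ⌊g' i * (nu i : ℝ)⌋)| with hDz
  have hn : 0 < k - 1 := by omega
  have hD : (K : ℝ) < (Dz : ℝ) := by exact_mod_cast h
  have hK1 : (1 : ℝ) ≤ (K : ℝ) := by
    have : 1 ≤ K := by omega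
    exact_mod_cast this
  -- Step A: bound Dz by the sum of |lam i - nu i|
  have hfloor : ∀ a b : ℝ, |((⌊a⌋ : ℝ)) - (⌊b⌋ : ℝ)| ≤ |a - b| + 1 := by
    intro a b
    have h1 := Int.floor_le a
    have h2 := Int.lt_floor_add_one a
    have h3 := Int.floor_le b
    have h4 := Int.lt_floor_add_one b
    have h5 := le_abs_self (a - b)
    have h6 := neg_abs_le (a - b)
    rw [abs_le]; constructor <;> linarith
  have hsum : (Dz : ℝ) ≤ Δ * ∑ i, |((lam i : ℝ)) - ((nu i : ℝ))| + (k - 1 : ℕ) := by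
    have h1 : (Dz : ℝ) ≤ ∑ i, |((⌊g' i * (lam i : ℝ)⌋ : ℝ)) - ((⌊g' i * (nu i : ℝ)⌋ : ℝ))| := by
      rw [hDz]
      push_cast
      rw [← Finset.sum_sub_distrib]
      exact Finset.abs_sum_le_sum_abs _ _
    have h2 : ∀ i : Fin (k - 1), |((⌊g' i * (lam i : ℝ)⌋ : ℝ)) - ((⌊g' i * (nu i : ℝ)⌋ : ℝ))|
        ≤ Δ * |((lam i : ℝ)) - ((nu i : ℝ))| + 1 := by
      intro i
      refine (hfloor _ _).trans ?_
      have : |g' i * (lam i : ℝ) - g' i * (nu i : ℝ)| = |g' i| * |((lam i : ℝ)) - ((nu i : ℝ))| := by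
        rw [← abs_mul, mul_sub]
      rw [this]
      have := mul_le_mul_of_nonneg_right (hg' i) (abs_nonneg ((lam i : ℝ) - (nu i : ℝ)))
      linarith
    calc (Dz : ℝ) ≤ ∑ i, |((⌊g' i * (lam i : ℝ)⌋ : ℝ)) - ((⌊g' i * (nu i : ℝ)⌋ : ℝ))| := h1
      _ ≤ ∑ i, (Δ * |((lam i : ℝ)) - ((nu i : ℝ))| + 1) := Finset.sum_le_sum fun i _ => h2 i
      _ = Δ * ∑ i, |((lam i : ℝ)) - ((nu i : ℝ))| + (k - 1 : ℕ) := by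
          rw [Finset.sum_add_distrib, ← Finset.mul_sum]
          simp
  -- pigeonhole
  obtain ⟨i₀, hi₀⟩ : ∃ i, ∑ j, |((lam j : ℝ)) - ((nu j : ℝ))| ≤ (k - 1 : ℕ) * |((lam i : ℝ)) - ((nu i : ℝ))| := by
    by_contra hcon
    push_neg at hcon
    have hne : (Finset.univ : Finset (Fin (k - 1))).Nonempty := ⟨⟨0, hn⟩, Finset.mem_univ _⟩
    have hlt := Finset.sum_lt_sum_of_nonempty hne (fun i _ => hcon i)
    have e1 : ∑ i : Fin (k - 1), ((k - 1 : ℕ) : ℝ) * |((lam i : ℝ)) - ((nu i : ℝ))|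
        = (k - 1 : ℕ) * ∑ i, |((lam i : ℝ)) - ((nu i : ℝ))| := by rw [← Finset.mul_sum]
    have e2 : ∑ _i : Fin (k - 1), (∑ j, |((lam j : ℝ)) - ((nu j : ℝ))|)
        = (k - 1 : ℕ) * ∑ j, |((lam j : ℝ)) - ((nu j : ℝ))| := by
      simp [Finset.sum_const, mul_comm]
    rw [e1, e2] at hlt
    exact lt_irrefl _ hlt
  set m : ℤ := lam i₀ - nu i₀ with hm
  have hmabs : ((Dz : ℝ)) - K ≤ Δ * (k - 1 : ℕ) * |(m : ℝ)| := by
    have hk1K : ((k - 1 : ℕ) : ℝ) ≤ (K : ℝ) := by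
      have : k - 1 ≤ K := by omega
      exact_mod_cast this
    have hmm : |(m : ℝ)| = |((lam i₀ : ℝ)) - ((nu i₀ : ℝ))| := by push_cast [hm]; ring_nf
    have hΔpos : (0 : ℝ) < Δ := lt_of_lt_of_le one_pos hΔ
    have := mul_le_mul_of_nonneg_left hi₀ (le_of_lt hΔpos)
    rw [hmm]
    nlinarith [Finset.sum_nonneg (fun i (_ : i ∈ Finset.univ) => abs_nonneg ((lam i : ℝ) - (nu i : ℝ)))]
  have hm0 : m ≠ 0 := by
    intro h0
    rw [h0] at hmabs
    simp at hmabs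
    linarith
  have hmR : ((m : ℝ)) ≠ 0 := Int.cast_ne_zero.mpr hm0
  have habsm : (0 : ℝ) < |(m : ℝ)| := abs_pos.mpr hmR
  -- Step B: independence
  set X : Ω → ℝ := G i₀ with hX
  set S : Finset (Fin (k - 1)) := Finset.univ.erase i₀ with hS
  set W : Ω → ℤ := fun ω => (nuk - lamk) + ∑ i ∈ S, (⌊G i ω * (nu i : ℝ)⌋ - ⌊G i ω * (lam i : ℝ)⌋) with hW
  have hXmeas : Measurable X := hG i₀
  have hWmeas : Measurable W := by
    apply Measurable.const_add
    apply Finset.measurable_sum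
    intro i _
    exact (((hG i).mul_const _).floor).sub (((hG i).mul_const _).floor)
  have hWX : IndepFun W X μ := by
    have hdisj : Disjoint S ({i₀} : Finset (Fin (k - 1))) := by
      simp [hS]
    have hbase := hindep.indepFun_finset S {i₀} hdisj hG
    have hφ : Measurable (fun g : ↥S → ℝ =>
        (nuk - lamk) + ∑ i : ↥S, (⌊g i * (nu i.1 : ℝ)⌋ - ⌊g i * (lam i.1 : ℝ)⌋)) := by
      apply Measurable.const_add
      apply Finset.measurable_sum
      intro i _
      exact (((measurable_pi_apply i).mul_const _).floor).sub
        (((measurable_pi_apply i).mul_const _).floor)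
    have hψ : Measurable (fun g : ↥({i₀} : Finset (Fin (k-1))) → ℝ =>
        g ⟨i₀, Finset.mem_singleton_self i₀⟩) := measurable_pi_apply _
    have := hbase.comp hφ hψ
    convert this using 1
    funext ω
    show W ω = _
    simp only [hW, Function.comp]
    congr 1
    rw [← Finset.sum_coe_sort S (fun i => (⌊G i ω * (nu i : ℝ)⌋ - ⌊G i ω * (lam i : ℝ)⌋))]
    rfl
  -- Step C: event rewrite
  set A : Set (ℤ × ℝ) := {p | ⌊p.2 * (lam i₀ : ℝ)⌋ - ⌊p.2 * (nu i₀ : ℝ)⌋ = p.1} with hA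
  have hAmeas : MeasurableSet A := by
    have : A = (fun p : ℤ × ℝ => ⌊p.2 * (lam i₀ : ℝ)⌋ - ⌊p.2 * (nu i₀ : ℝ)⌋ - p.1) ⁻¹' {0} := by
      ext p
      simp only [hA, Set.mem_setOf_eq, Set.mem_preimage, Set.mem_singleton_iff]
      omega
    rw [this]
    exact ((((measurable_snd.mul_const _).floor).sub ((measurable_snd.mul_const _).floor)).sub
      measurable_fst) (measurableSet_singleton 0)
  have hEvent : {ω | lamk + ∑ i, ⌊G i ω * (lam i : ℝ)⌋ = nuk + ∑ i, ⌊G i ω * (nu i : ℝ)⌋}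
      = (fun ω => (W ω, X ω)) ⁻¹' A := by
    ext ω
    simp only [Set.mem_setOf_eq, Set.mem_preimage, hA, hW, hX]
    rw [← Finset.add_sum_erase _ (fun i => ⌊G i ω * (lam i : ℝ)⌋) (Finset.mem_univ i₀),
        ← Finset.add_sum_erase _ (fun i => ⌊G i ω * (nu i : ℝ)⌋) (Finset.mem_univ i₀),
        Finset.sum_sub_distrib]
    simp only [hS]
    constructor <;> intro hh <;> omega
  -- Step D: measure computation
  have hprobX : IsProbabilityMeasure (μ.map X) := Measure.isProbabilityMeasure_map hXmeas.aemeasurable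
  have hprobW : IsProbabilityMeasure (μ.map W) := Measure.isProbabilityMeasure_map hWmeas.aemeasurable
  rw [hEvent, ← Measure.map_apply (hWmeas.prodMk hXmeas) hAmeas,
      (indepFun_iff_map_prod_eq_prod_map_map hWmeas.aemeasurable hXmeas.aemeasurable).mp hWX,
      Measure.prod_apply hAmeas]
  have hslice : ∀ w : ℤ, (μ.map X) (Prod.mk w ⁻¹' A) ≤ ENNReal.ofReal (c * (|(m : ℝ)|⁻¹ * 2)) := by
    intro w
    have hsub : Prod.mk w ⁻¹' A ⊆ (· * (m : ℝ)) ⁻¹' Set.Ioo ((w : ℝ) - 1) ((w : ℝ) + 1) := by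
      intro x hx
      simp only [Set.mem_preimage, hA, Set.mem_setOf_eq] at hx
      have hx' : ((⌊x * (lam i₀ : ℝ)⌋ : ℝ)) - ((⌊x * (nu i₀ : ℝ)⌋ : ℝ)) = (w : ℝ) := by
        exact_mod_cast congrArg (fun z : ℤ => (z : ℝ)) hx
      have h1 := Int.floor_le (x * (lam i₀ : ℝ))
      have h2 := Int.lt_floor_add_one (x * (lam i₀ : ℝ))
      have h3 := Int.floor_le (x * (nu i₀ : ℝ))
      have h4 := Int.lt_floor_add_one (x * (nu i₀ : ℝ))
      constructor <;> push_cast [hm] <;> nlinarith [mul_sub x ((lam i₀ : ℝ)) ((nu i₀ : ℝ))]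
    have hmeasIoo : MeasurableSet ((· * (m : ℝ)) ⁻¹' Set.Ioo ((w : ℝ) - 1) ((w : ℝ) + 1)) :=
      (measurable_id.mul_const _) measurableSet_Ioo
    calc (μ.map X) (Prod.mk w ⁻¹' A)
        ≤ (μ.map X) ((· * (m : ℝ)) ⁻¹' Set.Ioo ((w : ℝ) - 1) ((w : ℝ) + 1)) := measure_mono hsub
      _ ≤ ENNReal.ofReal c * volume ((· * (m : ℝ)) ⁻¹' Set.Ioo ((w : ℝ) - 1) ((w : ℝ) + 1)) :=
          hdens i₀ _ hmeasIoo
      _ = ENNReal.ofReal (c * (|(m : ℝ)|⁻¹ * 2)) := by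
          rw [Real.volume_preimage_mul_right hmR, Real.volume_Ioo]
          have : (w : ℝ) + 1 - ((w : ℝ) - 1) = 2 := by ring
          rw [this, abs_inv]
          rw [← ENNReal.ofReal_mul (by positivity), ← ENNReal.ofReal_mul hc.le]
  calc ∫⁻ w, (μ.map X) (Prod.mk w ⁻¹' A) ∂(μ.map W)
      ≤ ∫⁻ _, ENNReal.ofReal (c * (|(m : ℝ)|⁻¹ * 2)) ∂(μ.map W) :=
        lintegral_mono fun w => hslice w
    _ = ENNReal.ofReal (c * (|(m : ℝ)|⁻¹ * 2)) := by
        rw [lintegral_const, measure_univ, mul_one]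
    _ ≤ ENNReal.ofReal (2 * (K : ℝ) ^ 2 * Δ * c / (((Dz : ℤ) : ℝ) - (K : ℝ))) := by
        apply ENNReal.ofReal_le_ofReal
        have hDK : (0 : ℝ) < (Dz : ℝ) - K := by linarith
        have hΔpos : (0 : ℝ) < Δ := lt_of_lt_of_le one_pos hΔ
        have hk1K : ((k - 1 : ℕ) : ℝ) ≤ (K : ℝ) := by
          have : k - 1 ≤ K := by omega
          exact_mod_cast this
        have heq : c * (|(m : ℝ)|⁻¹ * 2) = 2 * c / |(m : ℝ)| := by
          field_simp
        rw [heq, div_le_div_iff₀ habsm hDK]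
        have hstep : ((Dz : ℝ)) - K ≤ Δ * (K : ℝ) ^ 2 * |(m : ℝ)| := by
          have hKK : ((k - 1 : ℕ) : ℝ) ≤ (K : ℝ) ^ 2 := by nlinarith
          have := mul_le_mul_of_nonneg_right (mul_le_mul_of_nonneg_left hKK hΔpos.le) habsm.le
          linarith
        nlinarith [mul_le_mul_of_nonneg_left hstep (by positivity : (0:ℝ) ≤ 2 * c)]
end
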